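/- Suppose r ≥ 2 and A = (a^i_j) ∈ E_k(n,r). Then: (a) for any p, q ∈ I(n,r-1), the scalars b^p_q(α) arising from the slice-sum condition (G) are independent of the place α; they all equal a common value b^p_q; and (b) for any p, q ∈ I(n,r-1), the n×n matrix A^p_q = (a^{p i}_{q j})_{i,j = 1,…,n} (entries indexed by appending i to p and j to q) is generalised doubly stochastic with all row and column sums equal to b^p_q. -/
import Mathlib


open Finset

/-- The value-type of a multi-index `i ∈ I(n,r)`, encoded as the equivalence
relation on places whose classes are the blocks `{α : i α = v}`. -/
def vt {n r : ℕ} (i : Fin r → Fin n) : Fin r → Fin r → Prop :=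
  fun a b => i a = i b

/-- Condition (G): for each place `α` and each pair of multi-indices obtained by
deleting place `α`, all row and column `α`-slice sums equal a common scalar. -/
def CondG (k : Type*) [CommRing k] (n r : ℕ)
    (A : Matrix (Fin r → Fin n) (Fin r → Fin n) k) : Prop :=
  ∀ (α : Fin r) (i j : Fin r → Fin n), ∃ b : k,
    (∀ y : Fin n, (∑ x : Fin n, A (Function.update i α x) (Function.update j α y)) = b) ∧
    (∀ x : Fin n, (∑ y : Fin n, A (Function.update i α x) (Function.update j α y)) = b)

/-- Condition (H): entries vanish when row and column indices have different value-types. -/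
def CondH (k : Type*) [CommRing k] (n r : ℕ)
    (A : Matrix (Fin r → Fin n) (Fin r → Fin n) k) : Prop :=
  ∀ i j : Fin r → Fin n, vt i ≠ vt j → A i j = 0

/-- Condition (S): invariance under simultaneous place permutation of rows and columns. -/
def CondS (k : Type*) [CommRing k] (n r : ℕ)
    (A : Matrix (Fin r → Fin n) (Fin r → Fin n) k) : Prop :=
  ∀ (σ : Equiv.Perm (Fin r)) (i j : Fin r → Fin n), A (i ∘ σ) (j ∘ σ) = A i j

/-- Membership in the centralizer algebra `E_k(n,r) = End_{P_r(n)}(V^{⊗r})`. -/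
def MemE (k : Type*) [CommRing k] (n r : ℕ)
    (A : Matrix (Fin r → Fin n) (Fin r → Fin n) k) : Prop :=
  CondG k n r A ∧ CondH k n r A ∧ CondS k n r A

/-- The restriction `ρ(A) ∈ Mat_{I(n,r-1)}(k)`: its `(p,q)`-entry is the slice sum
`Σ_x a^{p x}_{q 0}`, which for `A ∈ E_k(n,r)` is the common value of all slice
sums of `A` indexed by `p, q`. -/
def rho (k : Type*) [CommRing k] (n r : ℕ) [NeZero n]
    (A : Matrix (Fin (r+1) → Fin n) (Fin (r+1) → Fin n) k) :
    Matrix (Fin r → Fin n) (Fin r → Fin n) k :=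
  Matrix.of fun p q => ∑ x : Fin n, A (Fin.snoc p x) (Fin.snoc q 0)

/-- The `k`-module `E_k(n,r)^i_j` of special invariants: those `A ∈ E_k(n,r)` such
that `A s t ≠ 0` implies `Λ_i(s) = Λ_j(t)`. -/
def MemESpec (k : Type*) [CommRing k] (n r : ℕ) (i j : Fin n)
    (A : Matrix (Fin r → Fin n) (Fin r → Fin n) k) : Prop :=
  MemE k n r A ∧ ∀ s t : Fin r → Fin n, A s t ≠ 0 → ∀ α : Fin r, s α = i ↔ t α = j

/-- The `r`-th Kronecker power `P(w)^{⊗r}` of the permutation matrix of `w`. -/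
def kron (k : Type*) [CommRing k] (n r : ℕ) (w : Equiv.Perm (Fin n)) :
    Matrix (Fin r → Fin n) (Fin r → Fin n) k :=
  Matrix.of fun i j => if i = ⇑w ∘ j then 1 else 0


/-- The place permutation sending `castSucc t ↦ α.succAbove t` and `last ↦ α`. -/
noncomputable def sigmaFn {r : ℕ} (α : Fin (r+1)) : Equiv.Perm (Fin (r+1)) :=
  Equiv.ofBijective (Fin.snoc α.succAbove α) <| by
    rw [Fintype.bijective_iff_injective_and_card]
    refine ⟨fun a b hab => ?_, rfl⟩
    induction a using Fin.lastCases with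
    | last =>
      induction b using Fin.lastCases with
      | last => rfl
      | cast s =>
        simp only [Fin.snoc_last, Fin.snoc_castSucc] at hab
        exact absurd hab.symm (Fin.succAbove_ne α s)
    | cast t =>
      induction b using Fin.lastCases with
      | last =>
        simp only [Fin.snoc_last, Fin.snoc_castSucc] at hab
        exact absurd hab (Fin.succAbove_ne α t)
      | cast s =>
        simp only [Fin.snoc_castSucc] at hab
        rw [Fin.succAbove_right_injective hab]

lemma insertNth_comp_sigma {n r : ℕ} (α : Fin (r+2)) (x : Fin n) (p : Fin (r+1) → Fin n) :
    (α.insertNth x p) ∘ (sigmaFn α) = Fin.snoc p x := by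
  funext t
  simp only [Function.comp_apply, sigmaFn, Equiv.ofBijective_apply]
  induction t using Fin.lastCases with
  | last => simp
  | cast s => simp

/-- For `r ≥ 2` (represented as `r+2`) and `A ∈ E_k(n,r)`: (a) the slice-sum scalars
of condition (G) are independent of the place `α`, all equal to a common value
`b^p_q`; and (b) for any `p, q ∈ I(n,r-1)`, the n×n block `(a^{p x}_{q y})_{x,y}`
is generalised doubly stochastic with all row and column sums equal to `b^p_q`. -/
theorem stmt_3 {k : Type*} [CommRing k] {n r : ℕ} (hn : 0 < n)
    (A : Matrix (Fin (r+2) → Fin n) (Fin (r+2) → Fin n) k)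
    (hA : MemE k n (r+2) A) :
    ∀ p q : Fin (r+1) → Fin n, ∃ b : k,
      (∀ (α : Fin (r+2)) (y : Fin n),
        (∑ x : Fin n, A (α.insertNth x p) (α.insertNth y q)) = b) ∧
      (∀ (α : Fin (r+2)) (x : Fin n),
        (∑ y : Fin n, A (α.insertNth x p) (α.insertNth y q)) = b) ∧
      (∀ x : Fin n, (∑ y : Fin n, A (Fin.snoc p x) (Fin.snoc q y)) = b) ∧
      (∀ y : Fin n, (∑ x : Fin n, A (Fin.snoc p x) (Fin.snoc q y)) = b) := by
  obtain ⟨hG, _, hS⟩ := hA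
  intro p q
  obtain ⟨b, hb1, hb2⟩ := hG (Fin.last (r+1)) (Fin.snoc p ⟨0, hn⟩) (Fin.snoc q ⟨0, hn⟩)
  simp only [Fin.update_snoc_last] at hb1 hb2
  have key : ∀ (α : Fin (r+2)) (x y : Fin n),
      A (α.insertNth x p) (α.insertNth y q) = A (Fin.snoc p x) (Fin.snoc q y) := by
    intro α x y
    have := hS (sigmaFn α) (α.insertNth x p) (α.insertNth y q)
    rw [insertNth_comp_sigma, insertNth_comp_sigma] at this
    exact this.symm
  refine ⟨b, fun α y => ?_, fun α x => ?_, hb2, hb1⟩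
  · rw [Finset.sum_congr rfl fun x _ => key α x y]; exact hb1 y
  · rw [Finset.sum_congr rfl fun y _ => key α x y]; exact hb2 x
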